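/- Let (x_i)_{i≥1} be a P-greedy sequence of points: setting X_0 := ∅ and X_i := {x_1,…,x_i}, for every i ≥ 0 and every z ∈ Ω one has P_{X_i}(z) ≤ P_{X_i}(x_{i+1}). Suppose there exist C > 0 and ρ > 0 such that for every n ≥ 1 the closed absolutely convex hull acx(Φ(Ω)) admits an (n, C·n^{−ρ−1/2})-cover. Then for every n ≥ 1: sup_{z ∈ Ω} P_{X_{2n}}(z) ≤ √5 · C · 2^{ρ} · (2n)^{−ρ}. -/

import Mathlib

open scoped RealInnerProductSpace

variable {H : Type*} [NormedAddCommGroup H] [InnerProductSpace ℝ H] {Ω : Type*}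

/-- The kernel interpolant `I_X f`: the orthogonal projection of `f` onto
`V(X) = span {Φ(x) : x ∈ X}`. -/
noncomputable def interp (Φ : Ω → H) (X : Finset Ω) (f : H) : H :=
  haveI : FiniteDimensional ℝ (Submodule.span ℝ (Φ '' (X : Set Ω))) :=
    FiniteDimensional.span_of_finite ℝ (X.finite_toSet.image Φ)
  (Submodule.orthogonalProjection (Submodule.span ℝ (Φ '' (X : Set Ω))) f : H)

/-- The power function `P_X(z) = ‖Φ(z) − Π_{V(X)} Φ(z)‖`. -/
noncomputable def powerFun (Φ : Ω → H) (X : Finset Ω) (z : Ω) : ℝ :=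
  ‖Φ z - interp Φ X (Φ z)‖

/-- The sup norm `‖g‖_∞ = sup_{x ∈ Ω} |g(x)|`, where `g(x) = ⟪g, Φ(x)⟫`. -/
noncomputable def supNorm (Φ : Ω → H) (g : H) : ℝ := ⨆ x : Ω, |⟪g, Φ x⟫|

/-- `X_i = {x_1, …, x_i}` (so `X_0 = ∅`). -/
noncomputable def Xset (x : ℕ → Ω) (i : ℕ) : Finset Ω := by
  classical exact (Finset.Icc 1 i).image x

/-- The closed absolutely convex (symmetric convex) hull of `K`. -/
def acx (K : Set H) : Set H :=
  closure {y : H | ∃ (m : ℕ) (c : Fin m → ℝ) (g : Fin m → H),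
    (∀ j, g j ∈ K) ∧ (∑ j, |c j|) ≤ 1 ∧ y = ∑ j, c j • g j}

/-- `S` admits an `(n, ε)`-cover: it can be covered by at most `2^n` closed balls of
radius `ε`. -/
def HasCover (S : Set H) (n : ℕ) (ε : ℝ) : Prop :=
  ∃ (q : ℕ) (y : Fin q → H), q ≤ 2 ^ n ∧ S ⊆ ⋃ j, Metric.closedBall (y j) ε

noncomputable def Vsp (Φ : Ω → H) (X : Finset Ω) : Submodule ℝ H :=
  Submodule.span ℝ (Φ '' (X : Set Ω))

lemma Vsp_fd (Φ : Ω → H) (X : Finset Ω) : FiniteDimensional ℝ (Vsp Φ X) :=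
  FiniteDimensional.span_of_finite ℝ (X.finite_toSet.image Φ)

lemma Vsp_mono (Φ : Ω → H) {X Y : Finset Ω} (h : X ⊆ Y) : Vsp Φ X ≤ Vsp Φ Y :=
  Submodule.span_mono (Set.image_mono (by exact_mod_cast h))

lemma interp_mem (Φ : Ω → H) (X : Finset Ω) (f : H) : interp Φ X f ∈ Vsp Φ X := by
  haveI := Vsp_fd Φ X
  exact (Submodule.orthogonalProjection (Vsp Φ X) f).2

lemma sub_interp_mem (Φ : Ω → H) (X : Finset Ω) (f : H) :
    f - interp Φ X f ∈ (Vsp Φ X)ᗮ := by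
  haveI := Vsp_fd Φ X
  exact Submodule.sub_starProjection_mem_orthogonal (K := Vsp Φ X) f

lemma norm_sub_interp_le (Φ : Ω → H) (X : Finset Ω) {w : H} (hw : w ∈ Vsp Φ X) (f : H) :
    ‖f - interp Φ X f‖ ≤ ‖f - w‖ := by
  haveI := Vsp_fd Φ X
  rw [show interp Φ X f = (Vsp Φ X).starProjection f from rfl,
    Submodule.starProjection_minimal]
  exact ciInf_le ⟨0, by rintro b ⟨c, rfl⟩; exact norm_nonneg _⟩ (⟨w, hw⟩ : Vsp Φ X)

lemma powerFun_mono (Φ : Ω → H) {X Y : Finset Ω} (h : X ⊆ Y) (z : Ω) :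
    powerFun Φ Y z ≤ powerFun Φ X z :=
  norm_sub_interp_le Φ Y (Vsp_mono Φ h (interp_mem Φ X (Φ z))) (Φ z)

lemma Xset_subset (x : ℕ → Ω) {i j : ℕ} (h : i ≤ j) : Xset x i ⊆ Xset x j := by
  classical
  simpa [Xset] using Finset.image_subset_image (Finset.Icc_subset_Icc_right h)

lemma mem_Xset (x : ℕ → Ω) {k i : ℕ} (h1 : 1 ≤ k) (h2 : k ≤ i) : x k ∈ Xset x i := by
  classical
  simp only [Xset, Finset.mem_image]
  exact ⟨k, Finset.mem_Icc.mpr ⟨h1, h2⟩, rfl⟩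

lemma two_mul_factorial_le (n : ℕ) :
    ((2 * n).factorial : ℝ) ≤ (2 * (n:ℝ)) ^ n * (n.factorial : ℝ) := by
  induction n with
  | zero => simp
  | succ n ih =>
    have key : (2 * (n:ℝ) + 1) * (2 * (n:ℝ)) ^ n ≤ ((n:ℝ) + 1) * (2 * (n:ℝ) + 2) ^ n := by
      rcases Nat.eq_zero_or_pos n with rfl | hn
      · norm_num
      · have hn' : (0:ℝ) < n := by exact_mod_cast hn
        have h2 : (2:ℝ) ≤ (1 + 1/(n:ℝ)) ^ n := by
          have hb := one_add_mul_le_pow (a := 1/(n:ℝ))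
            ((by norm_num : (-2:ℝ) ≤ 0).trans (by positivity)) n
          calc (2:ℝ) = 1 + (n:ℝ) * (1/(n:ℝ)) := by
                rw [mul_one_div_cancel hn'.ne']; norm_num
          _ ≤ _ := hb
        have hmul : 2 * (2*(n:ℝ))^n ≤ (2*(n:ℝ)+2)^n := by
          calc 2 * (2*(n:ℝ))^n ≤ (1 + 1/(n:ℝ))^n * (2*(n:ℝ))^n := by
                have : (0:ℝ) ≤ (2*(n:ℝ))^n := by positivity
                nlinarith
          _ = ((1 + 1/(n:ℝ)) * (2*(n:ℝ)))^n := (mul_pow _ _ _).symm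
          _ = (2*(n:ℝ)+2)^n := by
                congr 1
                field_simp
        have hp : (0:ℝ) ≤ (2*(n:ℝ))^n := by positivity
        nlinarith
    have hcast : ((2 * (n+1)).factorial : ℝ)
        = (2*(n:ℝ)+2) * ((2*(n:ℝ)+1) * ((2*n).factorial : ℝ)) := by
      have : 2 * (n+1) = (2*n + 1) + 1 := by ring
      rw [this, Nat.factorial_succ, Nat.factorial_succ]
      push_cast
      ring
    have hfp : (0:ℝ) ≤ ((n).factorial : ℝ) := by positivity
    have h1 : (0:ℝ) ≤ 2*(n:ℝ)+2 := by positivity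
    have h2 : (0:ℝ) ≤ 2*(n:ℝ)+1 := by positivity
    calc ((2 * (n+1)).factorial : ℝ)
        = (2*(n:ℝ)+2) * ((2*(n:ℝ)+1) * ((2*n).factorial : ℝ)) := hcast
      _ ≤ (2*(n:ℝ)+2) * ((2*(n:ℝ)+1) * ((2 * (n:ℝ))^n * (n.factorial : ℝ))) := by
          have := mul_le_mul_of_nonneg_left ih h2
          nlinarith
      _ ≤ (2*(n:ℝ)+2) * (((n:ℝ)+1) * (2*(n:ℝ)+2)^n * (n.factorial : ℝ)) := by
          have := mul_le_mul_of_nonneg_right key hfp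
          nlinarith
      _ = (2 * ((n:ℝ)+1)) ^ (n+1) * (((n+1).factorial : ℝ)) := by
          push_cast [Nat.factorial_succ]
          rw [show 2*(n:ℝ)+2 = 2*((n:ℝ)+1) by ring]
          ring
      _ = (2 * ((n+1 : ℕ):ℝ)) ^ (n+1) * (((n+1).factorial : ℝ)) := by push_cast; ring

set_option maxHeartbeats 2000000 in
theorem statement_12 [Nonempty Ω]
    (Φ : Ω → H) (hΦ : ∀ z : Ω, ‖Φ z‖ ≤ 1)
    (x : ℕ → Ω)
    (hgreedy : ∀ (i : ℕ) (z : Ω),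
      powerFun Φ (Xset x i) z ≤ powerFun Φ (Xset x i) (x (i + 1)))
    (C ρ : ℝ) (hC : 0 < C) (hρ : 0 < ρ)
    (hcov : ∀ n : ℕ, 1 ≤ n →
      HasCover (acx (Set.range Φ)) n (C * (n : ℝ) ^ (-ρ - 1 / 2))) :
    ∀ n : ℕ, 1 ≤ n →
      (⨆ z : Ω, powerFun Φ (Xset x (2 * n)) z)
        ≤ Real.sqrt 5 * C * (2 : ℝ) ^ ρ * ((2 * n : ℕ) : ℝ) ^ (-ρ) := by
  classical
  intro n hn
  have hN1 : 1 ≤ 2 * n := by omega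
  set N := 2 * n with hNdef
  have hRHS0 : 0 ≤ Real.sqrt 5 * C * (2 : ℝ) ^ ρ * ((N : ℕ) : ℝ) ^ (-ρ) := by positivity
  -- the sequence of greedy errors
  set σ : ℕ → ℝ := fun i => powerFun Φ (Xset x i) (x (i + 1)) with hσdef
  have hσanti : Antitone σ := by
    apply antitone_nat_of_succ_le
    intro i
    exact (powerFun_mono Φ (Xset_subset x (Nat.le_succ i)) (x (i+2))).trans (hgreedy i (x (i+2)))
  have hσnonneg : ∀ i, 0 ≤ σ i := fun i => norm_nonneg _
  have hsup : (⨆ z : Ω, powerFun Φ (Xset x N) z) ≤ σ (N - 1) := by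
    apply ciSup_le
    intro z
    have h1 : powerFun Φ (Xset x N) z ≤ powerFun Φ (Xset x (N-1)) z :=
      powerFun_mono Φ (Xset_subset x (by omega)) z
    exact h1.trans (hgreedy (N-1) z)
  set s := σ (N - 1) with hsdef
  rcases eq_or_lt_of_le (hσnonneg (N-1)) with hs | hs
  · exact hsup.trans (by rw [hsdef, ← hs]; exact hRHS0)
  -- now the main case : s > 0
  refine hsup.trans ?_
  have hσpos : ∀ i : ℕ, i < N → s ≤ σ i := fun i hi => hσanti (by omega : i ≤ N - 1)
  set ε : ℝ := C * ((N : ℕ) : ℝ) ^ (-ρ - 1/2) with hεdef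
  have hε : 0 < ε := by
    have : (0:ℝ) < ((N : ℕ) : ℝ) := by positivity
    positivity
  obtain ⟨q, y, hq, hcover⟩ := hcov N hN1
  -- the orthonormal residual system
  set g : Fin N → H := fun i => Φ (x ((i:ℕ) + 1)) with hgdef
  set r : Fin N → H := fun i => g i - interp Φ (Xset x (i:ℕ)) (g i) with hrdef
  have hr_norm : ∀ i : Fin N, ‖r i‖ = σ (i:ℕ) := fun i => rfl
  have hrpos : ∀ i : Fin N, 0 < σ (i:ℕ) := fun i => lt_of_lt_of_le hs (hσpos _ i.2)
  set e : Fin N → H := fun i => (σ (i:ℕ))⁻¹ • r i with hedef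
  have hg_mem : ∀ i : Fin N, g i ∈ Vsp Φ (Xset x ((i:ℕ)+1)) := fun i =>
    Submodule.subset_span ⟨x ((i:ℕ)+1), by
      exact_mod_cast mem_Xset x (by omega) (le_refl _), rfl⟩
  have hr_orth : ∀ i : Fin N, r i ∈ (Vsp Φ (Xset x (i:ℕ)))ᗮ := fun i =>
    sub_interp_mem Φ (Xset x (i:ℕ)) (g i)
  have hr_mem : ∀ i : Fin N, r i ∈ Vsp Φ (Xset x ((i:ℕ)+1)) := fun i =>
    Submodule.sub_mem _ (hg_mem i)
      (Vsp_mono Φ (Xset_subset x (Nat.le_succ _)) (interp_mem Φ (Xset x (i:ℕ)) (g i)))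
  have hgr : ∀ i j : Fin N, (j:ℕ) < (i:ℕ) → ⟪g j, r i⟫ = 0 := by
    intro i j hji
    have hmem : g j ∈ Vsp Φ (Xset x (i:ℕ)) :=
      Vsp_mono Φ (Xset_subset x (by omega)) (hg_mem j)
    exact (Submodule.mem_orthogonal _ _).mp (hr_orth i) (g j) hmem
  have hrr : ∀ i j : Fin N, (j:ℕ) < (i:ℕ) → ⟪r j, r i⟫ = 0 := by
    intro i j hji
    have hmem : r j ∈ Vsp Φ (Xset x (i:ℕ)) :=
      Vsp_mono Φ (Xset_subset x (by omega)) (hr_mem j)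
    exact (Submodule.mem_orthogonal _ _).mp (hr_orth i) (r j) hmem
  have horth : Orthonormal ℝ e := by
    rw [orthonormal_iff_ite]
    intro i j
    rcases lt_trichotomy i j with hij | hij | hij
    · rw [if_neg hij.ne]
      have : ⟪r i, r j⟫ = 0 := hrr j i (by exact_mod_cast hij)
      simp [hedef, real_inner_smul_left, real_inner_smul_right, this]
    · subst hij
      rw [if_pos rfl]
      have : ⟪r i, r i⟫ = σ (i:ℕ) * σ (i:ℕ) := by
        rw [real_inner_self_eq_norm_mul_norm, hr_norm]
      rw [hedef]
      simp only [real_inner_smul_left, real_inner_smul_right, this]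
      field_simp [(hrpos i).ne']
    · rw [if_neg hij.ne']
      have : ⟪r j, r i⟫ = 0 := hrr i j (by exact_mod_cast hij)
      have h2 : ⟪r i, r j⟫ = 0 := by rw [real_inner_comm]; exact this
      simp [hedef, real_inner_smul_left, real_inner_smul_right, h2]
  -- the analysis and synthesis maps
  let T : H →ₗ[ℝ] EuclideanSpace ℝ (Fin N) :=
    { toFun := fun h => WithLp.toLp 2 (fun i => ⟪e i, h⟫)
      map_add' := fun a b => by ext i; simp [inner_add_right]
      map_smul' := fun c a => by ext i; simp [real_inner_smul_right] }
  have hTapp : ∀ (a : H) (i : Fin N), T a i = ⟪e i, a⟫ := fun a i => rfl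
  have hT : ∀ a : H, ‖T a‖ ≤ ‖a‖ := by
    intro a
    have hb := horth.sum_inner_products_le (𝕜 := ℝ) (x := a) (s := Finset.univ)
    rw [EuclideanSpace.norm_eq]
    have h2 : ∑ i, ‖T a i‖ ^ 2 ≤ ‖a‖ ^ 2 := hb
    calc Real.sqrt (∑ i, ‖T a i‖ ^ 2) ≤ Real.sqrt (‖a‖ ^ 2) := Real.sqrt_le_sqrt h2
    _ = ‖a‖ := Real.sqrt_sq (norm_nonneg a)
  let L : EuclideanSpace ℝ (Fin N) →ₗ[ℝ] H :=
    { toFun := fun c => ∑ i, c i • g i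
      map_add' := fun a b => by
        simp only [PiLp.add_apply, add_smul, Finset.sum_add_distrib]
      map_smul' := fun m a => by
        simp only [PiLp.smul_apply, smul_eq_mul, RingHom.id_apply, Finset.smul_sum, smul_smul] }
  let A := T ∘ₗ L
  -- the matrix of A is triangular with diagonal σ
  let b := (EuclideanSpace.basisFun (Fin N) ℝ).toBasis
  let M := LinearMap.toMatrix b b A
  have hM : ∀ i j, M i j = ⟪e i, g j⟫ := by
    intro i j
    have hbj : (b j : EuclideanSpace ℝ (Fin N)) = EuclideanSpace.single j 1 := by
      simp [b, EuclideanSpace.basisFun_apply]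
    have hLbj : L (b j) = g j := by
      rw [hbj]
      show ∑ i, (EuclideanSpace.single j (1:ℝ)) i • g i = g j
      simp [EuclideanSpace.single_apply]
    show (LinearMap.toMatrix b b A) i j = _
    rw [LinearMap.toMatrix_apply]
    show b.repr (T (L (b j))) i = _
    rw [hLbj]
    simp [b, OrthonormalBasis.coe_toBasis_repr_apply, EuclideanSpace.basisFun_repr, hTapp]
  have hMdiag : ∀ i, M i i = σ (i:ℕ) := by
    intro i
    rw [hM]
    have : ⟪e i, g i⟫ = (σ (i:ℕ))⁻¹ * ⟪r i, g i⟫ := real_inner_smul_left _ _ _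
    rw [this]
    have h1 : ⟪r i, interp Φ (Xset x (i:ℕ)) (g i)⟫ = 0 := by
      rw [real_inner_comm]
      exact (Submodule.mem_orthogonal _ _).mp (hr_orth i) _ (interp_mem Φ _ (g i))
    have h2 : ⟪r i, g i⟫ = σ (i:ℕ) * σ (i:ℕ) := by
      have hsum : r i + interp Φ (Xset x (i:ℕ)) (g i) = g i := by
        show g i - interp Φ (Xset x (i:ℕ)) (g i) + interp Φ (Xset x (i:ℕ)) (g i) = g i
        abel
      calc ⟪r i, g i⟫ = ⟪r i, r i + interp Φ (Xset x (i:ℕ)) (g i)⟫ := by rw [hsum]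
      _ = ⟪r i, r i⟫ + ⟪r i, interp Φ (Xset x (i:ℕ)) (g i)⟫ := inner_add_right _ _ _
      _ = σ (i:ℕ) * σ (i:ℕ) := by
            rw [h1, real_inner_self_eq_norm_mul_norm, hr_norm]; ring
    rw [h2]
    field_simp
  have hMtri : ∀ i j, j < i → M i j = 0 := by
    intro i j hji
    rw [hM]
    have : ⟪g j, r i⟫ = 0 := hgr i j (by exact_mod_cast hji)
    have h2 : ⟪r i, g j⟫ = 0 := by rw [real_inner_comm]; exact this
    simp [hedef, real_inner_smul_left, h2]
  have hdet : LinearMap.det A = ∏ i : Fin N, σ (i:ℕ) := by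
    rw [← LinearMap.det_toMatrix b A]
    rw [Matrix.det_of_upperTriangular (M := M) hMtri]
    exact Finset.prod_congr rfl fun i _ => hMdiag i
  -- the ℓ¹ ball and its image
  haveI : Nonempty (Fin N) := ⟨⟨0, by omega⟩⟩
  set Q : Set (EuclideanSpace ℝ (Fin N)) := {c | ∑ i, |c i| ≤ 1} with hQdef
  have hLQ : ∀ c ∈ Q, L c ∈ acx (Set.range Φ) := by
    intro c hc
    apply subset_closure
    exact ⟨N, fun i => c i, g, fun i => ⟨x ((i:ℕ)+1), rfl⟩, hc, rfl⟩
  have hsubset : (⇑A '' Q : Set _) ⊆ ⋃ j, Metric.closedBall (T (y j)) ε := by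
    rintro _ ⟨c, hc, rfl⟩
    have hmem := hcover (hLQ c hc)
    rw [Set.mem_iUnion] at hmem ⊢
    obtain ⟨j, hj⟩ := hmem
    refine ⟨j, ?_⟩
    rw [Metric.mem_closedBall] at hj ⊢
    have h1 : dist (A c) (T (y j)) = ‖T (L c - y j)‖ := by
      rw [dist_eq_norm, map_sub]; rfl
    rw [h1]
    calc ‖T (L c - y j)‖ ≤ ‖L c - y j‖ := hT _
    _ = dist (L c) (y j) := (dist_eq_norm _ _).symm
    _ ≤ ε := hj
  -- volume of the ℓ¹ ball
  have hmeas0 : MeasurableSet {z : Fin N → ℝ | ∑ i, |z i| ≤ 1} := by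
    apply IsClosed.measurableSet
    apply isClosed_le _ continuous_const
    exact continuous_finset_sum _ fun i _ => (continuous_apply i).abs
  have hQ0vol : MeasureTheory.volume {z : Fin N → ℝ | ∑ i, |z i| ≤ 1}
      = ENNReal.ofReal (2 ^ N / (N.factorial : ℝ)) := by
    have h := MeasureTheory.volume_sum_rpow_le (ι := Fin N) (p := 1) le_rfl 1
    have hset : {z : Fin N → ℝ | (∑ i, |z i| ^ (1:ℝ)) ^ (1/(1:ℝ)) ≤ 1}
        = {z : Fin N → ℝ | ∑ i, |z i| ≤ 1} := by
      ext z
      norm_num [Real.rpow_one]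
    rw [hset] at h
    rw [h]
    have h11 : (1:ℝ)/1 + 1 = 2 := by norm_num
    rw [Fintype.card_fin, h11, Real.Gamma_two, mul_one,
      show ((N:ℝ)/1 + 1) = ((N:ℕ):ℝ) + 1 by norm_num,
      Real.Gamma_nat_eq_factorial]
    simp
  have hQvol : MeasureTheory.volume Q = ENNReal.ofReal (2 ^ N / (N.factorial : ℝ)) := by
    have h := (EuclideanSpace.volume_preserving_symm_measurableEquiv_toLp (Fin N)).measure_preimage
      hmeas0.nullMeasurableSet
    rw [← hQ0vol, ← h]
    rfl
  have hABQ : MeasureTheory.volume (⇑A '' Q)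
      = ENNReal.ofReal |LinearMap.det A| * MeasureTheory.volume Q :=
    MeasureTheory.Measure.addHaar_image_linearMap _ A Q
  have hball : ∀ j : Fin q, MeasureTheory.volume (Metric.closedBall (T (y j)) ε)
      = ENNReal.ofReal ε ^ N
        * ENNReal.ofReal (Real.sqrt Real.pi ^ N / Real.Gamma ((N:ℝ)/2 + 1)) := by
    intro j
    rw [EuclideanSpace.volume_closedBall]
    rw [Fintype.card_fin]
  have hchain : ENNReal.ofReal (|LinearMap.det A| * (2 ^ N / (N.factorial : ℝ)))
      ≤ ENNReal.ofReal ((2:ℝ) ^ N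
          * (ε ^ N * (Real.sqrt Real.pi ^ N / Real.Gamma ((N:ℝ)/2 + 1)))) := by
    rw [ENNReal.ofReal_mul (abs_nonneg _), ← hQvol, ← hABQ]
    have hc0 : 0 ≤ Real.sqrt Real.pi ^ N / Real.Gamma ((N:ℝ)/2 + 1) := by
      have h1 : (0:ℝ) < Real.Gamma ((N:ℝ)/2 + 1) := Real.Gamma_pos_of_pos (by positivity)
      positivity
    calc MeasureTheory.volume (⇑A '' Q)
        ≤ MeasureTheory.volume (⋃ j, Metric.closedBall (T (y j)) ε) :=
          MeasureTheory.measure_mono hsubset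
      _ ≤ ∑ j : Fin q, MeasureTheory.volume (Metric.closedBall (T (y j)) ε) :=
          MeasureTheory.measure_iUnion_fintype_le _ _
      _ = (q : ENNReal) * (ENNReal.ofReal ε ^ N
            * ENNReal.ofReal (Real.sqrt Real.pi ^ N / Real.Gamma ((N:ℝ)/2 + 1))) := by
          simp [hball, Finset.sum_const, Finset.card_univ, mul_comm]
      _ ≤ ((2:ENNReal) ^ N) * (ENNReal.ofReal ε ^ N
            * ENNReal.ofReal (Real.sqrt Real.pi ^ N / Real.Gamma ((N:ℝ)/2 + 1))) := by
          apply mul_le_mul_left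
          calc (q : ENNReal) ≤ ((2 ^ N : ℕ) : ENNReal) := by exact_mod_cast hq
          _ = (2:ENNReal) ^ N := by push_cast; ring
      _ = ENNReal.ofReal ((2:ℝ) ^ N
            * (ε ^ N * (Real.sqrt Real.pi ^ N / Real.Gamma ((N:ℝ)/2 + 1)))) := by
          rw [ENNReal.ofReal_mul (by positivity : (0:ℝ) ≤ 2 ^ N),
            ENNReal.ofReal_mul (by positivity : (0:ℝ) ≤ ε ^ N),
            ENNReal.ofReal_pow (by norm_num : (0:ℝ) ≤ 2),
            ENNReal.ofReal_pow hε.le, ENNReal.ofReal_ofNat]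
  -- pass to the real inequality
  have hNpos : (0:ℝ) < ((N:ℕ):ℝ) := by
    have : 0 < N := by omega
    exact_mod_cast this
  have hGamma : Real.Gamma ((N:ℝ)/2 + 1) = (n.factorial : ℝ) := by
    rw [show ((N:ℝ)/2 + 1) = ((n:ℕ):ℝ) + 1 by rw [hNdef]; push_cast; ring]
    exact Real.Gamma_nat_eq_factorial n
  have hsq : ∀ a : ℝ, 0 ≤ a → Real.sqrt a ^ N = a ^ n := by
    intro a ha
    rw [hNdef, pow_mul, Real.sq_sqrt ha]
  have hrealineq : |LinearMap.det A| * (2 ^ N / (N.factorial : ℝ))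
      ≤ 2 ^ N * (ε ^ N * (Real.pi ^ n / (n.factorial : ℝ))) := by
    rw [hGamma, hsq Real.pi Real.pi_nonneg] at hchain
    exact (ENNReal.ofReal_le_ofReal_iff (by positivity)).mp hchain
  have hdet_ge : s ^ N ≤ |LinearMap.det A| := by
    rw [hdet, abs_of_nonneg (Finset.prod_nonneg fun i _ => (hrpos i).le)]
    calc s ^ N = ∏ _i : Fin N, s := by
          rw [Finset.prod_const, Finset.card_univ, Fintype.card_fin]
    _ ≤ ∏ i : Fin N, σ (i:ℕ) :=
          Finset.prod_le_prod (fun _ _ => hσnonneg (N-1)) (fun i _ => hσpos _ i.2)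
  have hkey : s ^ N ≤ (N.factorial : ℝ) * ε ^ N * Real.pi ^ n / (n.factorial : ℝ) := by
    have h2N : (0:ℝ) < 2 ^ N / (N.factorial : ℝ) := by positivity
    have h1 : s ^ N * (2 ^ N / (N.factorial : ℝ))
        ≤ 2 ^ N * (ε ^ N * (Real.pi ^ n / (n.factorial : ℝ))) :=
      le_trans (mul_le_mul_of_nonneg_right hdet_ge h2N.le) hrealineq
    rw [← le_div_iff₀ h2N] at h1
    calc s ^ N ≤ _ := h1
    _ = (N.factorial : ℝ) * ε ^ N * Real.pi ^ n / (n.factorial : ℝ) := by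
        field_simp
  -- conclude
  set t : ℝ := Real.sqrt 5 * Real.sqrt ((N:ℕ):ℝ) * ε with htdef
  have ht0 : 0 ≤ t := by positivity
  have hfac : (N.factorial : ℝ) ≤ ((N:ℕ):ℝ) ^ n * (n.factorial : ℝ) := by
    have h := two_mul_factorial_le n
    rw [hNdef]
    push_cast at h ⊢
    convert h using 3
  have hpi : Real.pi ^ n ≤ 5 ^ n :=
    pow_le_pow_left₀ Real.pi_nonneg (by linarith [Real.pi_le_four]) n
  have hsN : s ^ N ≤ t ^ N := by
    rw [htdef, mul_pow, mul_pow, hsq 5 (by norm_num), hsq _ hNpos.le]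
    have hεN : (0:ℝ) ≤ ε ^ N := by positivity
    have h1 : (N.factorial:ℝ) * ε^N * Real.pi^n
        ≤ (((N:ℕ):ℝ)^n * (n.factorial:ℝ)) * ε^N * 5^n := by
      apply mul_le_mul (mul_le_mul hfac le_rfl hεN (by positivity)) hpi (by positivity)
        (by positivity)
    calc s ^ N ≤ (N.factorial : ℝ) * ε ^ N * Real.pi ^ n / (n.factorial : ℝ) := hkey
    _ ≤ ((((N:ℕ):ℝ)^n * (n.factorial:ℝ)) * ε^N * 5^n) / (n.factorial : ℝ) :=
        (div_le_div_iff_of_pos_right (by positivity)).mpr h1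
    _ = 5 ^ n * ((N:ℕ):ℝ) ^ n * ε ^ N := by
        field_simp
  have hst : s ≤ t := le_of_pow_le_pow_left₀ (by omega) ht0 hsN
  have hsqrtN : Real.sqrt ((N:ℕ):ℝ) * ((N:ℕ):ℝ) ^ (-ρ - 1/2) = ((N:ℕ):ℝ) ^ (-ρ) := by
    rw [Real.sqrt_eq_rpow, ← Real.rpow_add hNpos]
    norm_num
  have ht_eq : t = Real.sqrt 5 * C * ((N:ℕ):ℝ) ^ (-ρ) := by
    rw [htdef, hεdef, ← hsqrtN]
    ring
  have h2ρ : (1:ℝ) ≤ (2:ℝ) ^ ρ := by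
    have h := Real.rpow_le_rpow_of_exponent_le (by norm_num : (1:ℝ) ≤ 2) hρ.le
    simpa using h
  calc s ≤ t := hst
  _ = Real.sqrt 5 * C * ((N:ℕ):ℝ) ^ (-ρ) := ht_eq
  _ ≤ Real.sqrt 5 * C * (2:ℝ) ^ ρ * ((N:ℕ):ℝ) ^ (-ρ) := by
      have h0 : 0 ≤ Real.sqrt 5 * C * ((N:ℕ):ℝ) ^ (-ρ) := by positivity
      nlinarith [h0, h2ρ]
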